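/- Let $\Theta\in (l_0(\mathbb{Z}))^{r\times r}$ be a finitely supported matrix-valued filter and define the convolution operator $C_\Theta(v):=v*\Theta$ for $v\in (l_\infty(\mathbb{Z}))^{1\times r}$, where $(v*\Theta)(n)=\sum_{k\in\mathbb{Z}} v(k)\Theta(n-k)$. Then $C_\Theta:(l_\infty(\mathbb{Z}))^{1\times r}\to (l_\infty(\mathbb{Z}))^{1\times r}$ is injective if and only if $\det(\widehat{\Theta}(\xi))\neq 0$ for all $\xi\in\mathbb{R}$, where $\widehat{\Theta}(\xi)=\sum_{k\in\mathbb{Z}}\Theta(k)e^{-ik\xi}$. -/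

import Mathlib

/-- The symbol of a finitely supported matrix-valued sequence. -/
noncomputable def trigSymM {α β : Type*} (U : ℤ →₀ Matrix α β ℂ) (ξ : ℝ) : Matrix α β ℂ :=
  U.sum fun k A => Complex.exp (-Complex.I * (k : ℂ) * (ξ : ℂ)) • A

/-- Convolution of a row-vector sequence `v : ℤ → ℂ^{1×r}` with a finitely supported
matrix filter `Θ`: `(v*Θ)(n) = ∑ₖ v(k)Θ(n-k)`. -/
noncomputable def convRow {r : ℕ} (v : ℤ → Fin r → ℂ)
    (Θ : ℤ →₀ Matrix (Fin r) (Fin r) ℂ) (n : ℤ) : Fin r → ℂ :=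
  fun j => ∑ l ∈ Θ.support, ∑ i, v (n - l) i * Θ l i j

/-- A vector sequence is bounded (belongs to `(l_∞(ℤ))^{1×r}`). -/
def IsBddSeq {r : ℕ} (v : ℤ → Fin r → ℂ) : Prop :=
  ∃ M : ℝ, ∀ (k : ℤ) (i : Fin r), ‖v k i‖ ≤ M

open Finsupp Polynomial LaurentPolynomial Complex

noncomputable section ConvAux

/-- scalar convolution of a sequence with a Laurent polynomial (finitely supported filter). -/
def convS (u : ℤ → ℂ) (d : LaurentPolynomial ℂ) (n : ℤ) : ℂ :=
  d.coeff.sum fun l c => u (n - l) * c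

/-- `convS u · n` as an additive monoid hom. -/
def convSHom (u : ℤ → ℂ) (n : ℤ) : LaurentPolynomial ℂ →+ ℂ :=
  (Finsupp.liftAddHom fun l => AddMonoidHom.mulLeft (u (n - l))).comp
    AddMonoidAlgebra.coeffAddEquiv.toAddMonoidHom

lemma convSHom_apply (u : ℤ → ℂ) (n : ℤ) (d : LaurentPolynomial ℂ) :
    convSHom u n d = convS u d n := rfl

lemma convS_single (u : ℤ → ℂ) (a : ℤ) (c : ℂ) (n : ℤ) :
    convS u (AddMonoidAlgebra.single a c) n = u (n - a) * c :=
  Finsupp.sum_single_index (mul_zero _)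

lemma convS_mul (u : ℤ → ℂ) (d e : LaurentPolynomial ℂ) (n : ℤ) :
    convS u (d * e) n = convS (fun m => convS u d m) e n := by
  rw [← convSHom_apply, AddMonoidAlgebra.mul_def, map_finsuppSum]
  simp only [map_finsuppSum, convSHom_apply, convS_single]
  unfold convS Finsupp.sum
  rw [Finset.sum_comm]
  simp only [Finset.sum_mul]
  refine Finset.sum_congr rfl fun a2 _ => Finset.sum_congr rfl fun a1 _ => ?_
  rw [mul_assoc]
  congr 2
  ring

lemma convS_zero_fun (d : LaurentPolynomial ℂ) (n : ℤ) :
    convS (fun _ => (0:ℂ)) d n = 0 :=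
  Finset.sum_eq_zero fun _ _ => zero_mul _

lemma convS_sum_fun {ι : Type*} (s : Finset ι) (U : ι → ℤ → ℂ)
    (d : LaurentPolynomial ℂ) (n : ℤ) :
    convS (fun m => ∑ p ∈ s, U p m) d n = ∑ p ∈ s, convS (U p) d n := by
  unfold convS Finsupp.sum
  rw [Finset.sum_comm]
  exact Finset.sum_congr rfl fun l _ => Finset.sum_mul ..

noncomputable section ConvAux2

def IsBddS (u : ℤ → ℂ) : Prop := ∃ M : ℝ, ∀ n : ℤ, ‖u n‖ ≤ M

lemma first_order (u : ℤ → ℂ) (hu : IsBddS u) (a : ℂ) (ha : ‖a‖ ≠ 1)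
    (h : ∀ n : ℤ, u (n - 1) = u n * a) : u = 0 := by
  rcases eq_or_ne a 0 with rfl | ha0
  · funext m
    have := h (m + 1)
    simpa using this
  -- general formula
  have key : ∀ n : ℤ, u n = u 0 * a ^ (-n) := by
    intro n
    induction n using Int.induction_on with
    | zero => simp
    | succ k ih =>
        have hk := h (k + 1)
        rw [add_sub_cancel_right] at hk
        have h2 : u (k + 1) = u k * a⁻¹ := by
          field_simp [hk]
          exact hk.symm
        rw [h2, ih, mul_assoc, ← zpow_sub_one₀ ha0]
        congr 1
        ring
    | pred k ih =>
        have hk := h (-k)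
        have h2 : (-(k:ℤ) - 1) = -((k:ℤ)+1) := by ring
        rw [h2] at hk ⊢
        rw [hk, ih, mul_assoc, ← zpow_add_one₀ ha0]
        congr 1
        ring
  -- suffices u 0 = 0
  suffices h0 : u 0 = 0 by
    funext n; rw [key n, h0, zero_mul]; rfl
  by_contra h0
  obtain ⟨M, hM⟩ := hu
  have hu0 : 0 < ‖u 0‖ := norm_pos_iff.mpr h0
  have hb : 0 < ‖a‖ := by
    simpa using norm_pos_iff.mpr ha0
  have hnorm : ∀ n : ℤ, ‖u n‖ = ‖u 0‖ * (‖a‖) ^ (-n) := by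
    intro n
    rw [key n, norm_mul, norm_zpow]
  rcases lt_or_gt_of_ne ha with hlt | hgt
  · -- |a| < 1, use n → ∞
    have h1 : 1 < (‖a‖)⁻¹ := (one_lt_inv₀ hb).mpr hlt
    obtain ⟨m, hm⟩ := pow_unbounded_of_one_lt (M / ‖u 0‖) h1
    have hle := hM (m : ℤ)
    rw [hnorm (m : ℤ)] at hle
    have : (‖a‖) ^ (-(m:ℤ)) = ((‖a‖)⁻¹) ^ m := by
      rw [zpow_neg, ← inv_zpow, zpow_natCast]
    rw [this] at hle
    have h3 : M / ‖u 0‖ < ((‖a‖)⁻¹) ^ m := hm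
    rw [div_lt_iff₀ hu0] at h3
    nlinarith
  · -- |a| > 1, use n → -∞
    obtain ⟨m, hm⟩ := pow_unbounded_of_one_lt (M / ‖u 0‖) hgt
    have hle := hM (-(m : ℤ))
    rw [hnorm (-(m:ℤ))] at hle
    rw [neg_neg, zpow_natCast] at hle
    have h3 : M / ‖u 0‖ < (‖a‖) ^ m := hm
    rw [div_lt_iff₀ hu0] at h3
    nlinarith

lemma convS_one (u : ℤ → ℂ) (n : ℤ) : convS u 1 n = u n := by
  have : (1 : LaurentPolynomial ℂ) = AddMonoidAlgebra.single 0 1 := rfl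
  rw [this, convS_single]
  simp

lemma convS_C (u : ℤ → ℂ) (c : ℂ) (n : ℤ) : convS u (LaurentPolynomial.C c) n = u n * c := by
  have : (LaurentPolynomial.C c : LaurentPolynomial ℂ) = AddMonoidAlgebra.single 0 c := by
    rw [single_eq_C_mul_T, T_zero, mul_one]
  rw [this, convS_single, sub_zero]

lemma convS_T1 (u : ℤ → ℂ) (n : ℤ) : convS u (LaurentPolynomial.T 1) n = u (n - 1) := by
  have : (LaurentPolynomial.T 1 : LaurentPolynomial ℂ) = AddMonoidAlgebra.single 1 1 := rfl
  rw [this, convS_single, mul_one]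

lemma mult_ind (s : Multiset ℂ) :
    (∀ a ∈ s, ‖a‖ ≠ 1) → ∀ u : ℤ → ℂ, IsBddS u →
    (∀ n, convS u (s.map fun a => LaurentPolynomial.T 1 - LaurentPolynomial.C a).prod n = 0) →
    u = 0 := by
  induction s using Multiset.induction_on with
  | empty =>
      intro _ u _ h
      funext n
      have := h n
      rwa [Multiset.map_zero, Multiset.prod_zero, convS_one] at this
  | cons a s ih =>
      intro hs u hu h
      have ha : ‖a‖ ≠ 1 := hs a (Multiset.mem_cons_self a s)
      set u1 : ℤ → ℂ := fun m => convS u (LaurentPolynomial.T 1 - LaurentPolynomial.C a) m with hu1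
      have hu1eq : ∀ m, u1 m = u (m - 1) - u m * a := by
        intro m
        rw [hu1]
        simp only
        rw [← convSHom_apply, map_sub, convSHom_apply, convSHom_apply, convS_T1, convS_C]
      have hu1bdd : IsBddS u1 := by
        obtain ⟨M, hM⟩ := hu
        exact ⟨M + M * ‖a‖, fun m => by
          rw [hu1eq m]
          calc ‖u (m-1) - u m * a‖ ≤ ‖u (m-1)‖ + ‖u m * a‖ := norm_sub_le _ _
          _ ≤ M + M * ‖a‖ := by
              rw [norm_mul]
              exact add_le_add (hM _)
                (mul_le_mul_of_nonneg_right (hM _) (norm_nonneg a))⟩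
      have h1 : ∀ n, convS u1 ((s.map fun a => LaurentPolynomial.T 1 - LaurentPolynomial.C a)).prod n = 0 := by
        intro n
        have := h n
        rwa [Multiset.map_cons, Multiset.prod_cons, convS_mul] at this
      have hzero : u1 = 0 := ih (fun b hb => hs b (Multiset.mem_cons_of_mem hb)) u1 hu1bdd h1
      refine first_order u hu a ha fun n => ?_
      have := congrFun hzero n
      rw [hu1eq n] at this
      simpa [sub_eq_zero] using this

/-- evaluation of a Laurent filter at `e^{-iξ}`, as a ring hom. -/
def phiSym (ξ : ℝ) : LaurentPolynomial ℂ →+* ℂ :=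
  ((AddMonoidAlgebra.lift ℂ ℂ ℤ)
    ((Units.coeHom ℂ).comp (zpowersHom ℂˣ
      (Units.mk0 (Complex.exp (-(ξ:ℂ) * Complex.I)) (Complex.exp_ne_zero _))))).toRingHom

lemma phiSym_single (ξ : ℝ) (a : ℤ) (c : ℂ) :
    phiSym ξ (AddMonoidAlgebra.single a c) = c * (Complex.exp (-(ξ:ℂ) * Complex.I)) ^ a := by
  unfold phiSym
  rw [AlgHom.toRingHom_eq_coe, RingHom.coe_coe, AddMonoidAlgebra.lift_single]
  simp [Units.smul_def]

lemma phiSym_T (ξ : ℝ) (n : ℤ) :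
    phiSym ξ (LaurentPolynomial.T n) = (Complex.exp (-(ξ:ℂ) * Complex.I)) ^ n := by
  have : (LaurentPolynomial.T n : LaurentPolynomial ℂ) = AddMonoidAlgebra.single n 1 := rfl
  rw [this, phiSym_single, one_mul]

lemma phiSym_C (ξ : ℝ) (c : ℂ) : phiSym ξ (LaurentPolynomial.C c) = c := by
  have : (LaurentPolynomial.C c : LaurentPolynomial ℂ) = AddMonoidAlgebra.single 0 c := by
    rw [single_eq_C_mul_T, T_zero, mul_one]
  rw [this, phiSym_single]
  simp

lemma phiSym_toLaurent (ξ : ℝ) (p : Polynomial ℂ) :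
    phiSym ξ (p.toLaurent) = p.eval (Complex.exp (-(ξ:ℂ) * Complex.I)) := by
  have : (phiSym ξ).comp (Polynomial.toLaurent) =
      Polynomial.evalRingHom (Complex.exp (-(ξ:ℂ) * Complex.I)) := by
    apply Polynomial.ringHom_ext
    · intro a
      simp [Polynomial.toLaurent_C, phiSym_C]
    · simp [Polynomial.toLaurent_X, phiSym_T]
  exact RingHom.congr_fun this p

lemma scalar_lemma (u : ℤ → ℂ) (hu : IsBddS u) (D : LaurentPolynomial ℂ)
    (hD : ∀ ξ : ℝ, phiSym ξ D ≠ 0) (h : ∀ n, convS u D n = 0) : u = 0 := by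
  obtain ⟨m, p, hp⟩ := D.exists_T_pow
  have hDT : ∀ ξ : ℝ, phiSym ξ (p.toLaurent) ≠ 0 := by
    intro ξ
    rw [hp, map_mul, phiSym_T]
    exact mul_ne_zero (hD ξ) (zpow_ne_zero _ (Complex.exp_ne_zero _))
  have hpne : p ≠ 0 := by
    rintro rfl
    exact hDT 0 (by simp)
  have hconv : ∀ n, convS u (p.toLaurent) n = 0 := by
    intro n
    rw [hp, convS_mul]
    have : (fun m' => convS u D m') = fun _ => (0:ℂ) := funext h
    rw [this]
    exact convS_zero_fun _ _
  -- factor p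
  have hcard : p.roots.card = p.natDegree :=
    (Polynomial.splits_iff_card_roots).mp (IsAlgClosed.splits p)
  have hfact := Polynomial.C_leadingCoeff_mul_prod_multiset_X_sub_C hcard
  set lc := p.leadingCoeff with hlc
  have hlcne : lc ≠ 0 := Polynomial.leadingCoeff_ne_zero.mpr hpne
  have hfactL : p.toLaurent = LaurentPolynomial.C lc *
      (p.roots.map fun a => LaurentPolynomial.T 1 - LaurentPolynomial.C a).prod := by
    conv_lhs => rw [← hfact]
    rw [map_mul, Polynomial.toLaurent_C, map_multiset_prod, Multiset.map_map]
    congr 1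
    congr 1
    refine Multiset.map_congr rfl fun a _ => ?_
    simp [Polynomial.toLaurent_X, Polynomial.toLaurent_C]
  -- roots off the unit circle
  have hroots : ∀ a ∈ p.roots, ‖a‖ ≠ 1 := by
    intro a haroot habs
    have ha0 : a ≠ 0 := by
      intro h0
      rw [h0] at habs
      simp at habs
    have hz : Complex.exp (-((-a.arg : ℝ):ℂ) * Complex.I) = a := by
      push_cast
      rw [neg_neg]
      have := Complex.norm_mul_exp_arg_mul_I a
      rwa [habs, Complex.ofReal_one, one_mul] at this
    have := hDT (-a.arg)
    rw [phiSym_toLaurent, hz] at this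
    exact this ((Polynomial.mem_roots hpne).mp haroot)
  -- reduce by leading coefficient
  set u' : ℤ → ℂ := fun n => u n * lc with hu'
  have hu'bdd : IsBddS u' := by
    obtain ⟨M, hM⟩ := hu
    exact ⟨M * ‖lc‖, fun n => by
      rw [hu']
      simp only
      rw [norm_mul]
      exact mul_le_mul_of_nonneg_right (hM n) (norm_nonneg lc)⟩
  have hconv' : ∀ n, convS u'
      (p.roots.map fun a => LaurentPolynomial.T 1 - LaurentPolynomial.C a).prod n = 0 := by
    intro n
    have := hconv n
    rw [hfactL, convS_mul] at this
    convert this using 2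
    funext m'
    rw [hu']
    simp only
    rw [convS_C]
  have hzero : u' = 0 := mult_ind p.roots hroots u' hu'bdd hconv'
  funext n
  have := congrFun hzero n
  rw [hu'] at this
  simp only at this
  exact (mul_eq_zero.mp this).resolve_right hlcne

variable {r : ℕ}

/-- matrix of Laurent filters from a finitely supported matrix filter. -/
def toM (Θ : ℤ →₀ Matrix (Fin r) (Fin r) ℂ) :
    Matrix (Fin r) (Fin r) (LaurentPolynomial ℂ) :=
  Matrix.of fun i j => AddMonoidAlgebra.ofCoeff (Θ.mapRange (fun A => A i j) rfl)

lemma toM_coeff (Θ : ℤ →₀ Matrix (Fin r) (Fin r) ℂ) (i j : Fin r) (l : ℤ) :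
    (toM Θ i j).coeff l = Θ l i j := rfl

lemma convS_toM (u : ℤ → ℂ) (Θ : ℤ →₀ Matrix (Fin r) (Fin r) ℂ) (i j : Fin r) (n : ℤ) :
    convS u (toM Θ i j) n = ∑ l ∈ Θ.support, u (n - l) * Θ l i j := by
  unfold convS
  rw [show (toM Θ i j).coeff = Finsupp.mapRange (fun A => A i j) rfl Θ from rfl]
  erw [Finsupp.sum_mapRange_index (fun l => mul_zero _)]
  rfl

def convRowM (v : ℤ → Fin r → ℂ) (M : Matrix (Fin r) (Fin r) (LaurentPolynomial ℂ))
    (n : ℤ) (j : Fin r) : ℂ :=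
  ∑ i, convS (fun m => v m i) (M i j) n

lemma convRow_eq_convRowM (v : ℤ → Fin r → ℂ) (Θ : ℤ →₀ Matrix (Fin r) (Fin r) ℂ)
    (n : ℤ) (j : Fin r) : convRow v Θ n j = convRowM v (toM Θ) n j := by
  unfold convRow convRowM
  simp only [convS_toM]
  exact Finset.sum_comm

lemma convS_finsetSum (u : ℤ → ℂ) {ι : Type*} (s : Finset ι)
    (d : ι → LaurentPolynomial ℂ) (n : ℤ) :
    convS u (∑ i ∈ s, d i) n = ∑ i ∈ s, convS u (d i) n := by
  rw [← convSHom_apply, map_sum]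
  rfl

lemma convS_zero_filter (u : ℤ → ℂ) (n : ℤ) : convS u (0 : LaurentPolynomial ℂ) n = 0 :=
  Finsupp.sum_zero_index

lemma convRowM_mul (v : ℤ → Fin r → ℂ)
    (M N : Matrix (Fin r) (Fin r) (LaurentPolynomial ℂ)) (n : ℤ) (j : Fin r) :
    convRowM (fun m i => convRowM v M m i) N n j = convRowM v (M * N) n j := by
  unfold convRowM
  have step1 : ∀ i : Fin r,
      convS (fun m => ∑ p, convS (fun m' => v m' p) (M p i) m) (N i j) n
        = ∑ p, convS (fun m' => v m' p) (M p i * N i j) n := by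
    intro i
    rw [convS_sum_fun]
    exact Finset.sum_congr rfl fun p _ => (convS_mul _ _ _ _).symm
  simp only [step1]
  rw [Finset.sum_comm]
  refine Finset.sum_congr rfl fun p _ => ?_
  rw [Matrix.mul_apply, convS_finsetSum]

lemma key_det (v : ℤ → Fin r → ℂ) (Θ : ℤ →₀ Matrix (Fin r) (Fin r) ℂ)
    (hv : ∀ n j, convRow v Θ n j = 0) (j : Fin r) (n : ℤ) :
    convS (fun m => v m j) ((toM Θ).det) n = 0 := by
  have h0 : ∀ m i, convRowM v (toM Θ) m i = 0 := by
    intro m i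
    rw [← convRow_eq_convRowM]
    exact hv m i
  have hfun : (fun m i => convRowM v (toM Θ) m i) = (fun _ _ => (0:ℂ)) := by
    funext m i; exact h0 m i
  have h1 : convRowM v (toM Θ * (toM Θ).adjugate) n j = 0 := by
    rw [← convRowM_mul, hfun]
    unfold convRowM
    exact Finset.sum_eq_zero fun i _ => convS_zero_fun _ _
  rw [Matrix.mul_adjugate] at h1
  unfold convRowM at h1
  rw [Finset.sum_eq_single j] at h1
  · rwa [Matrix.smul_apply, Matrix.one_apply_eq, smul_eq_mul, mul_one] at h1
  · intro i _ hij
    rw [Matrix.smul_apply, Matrix.one_apply_ne hij, smul_zero]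
    exact convS_zero_filter _ _
  · intro h; exact absurd (Finset.mem_univ j) h

lemma trig_entry (Θ : ℤ →₀ Matrix (Fin r) (Fin r) ℂ) (ξ : ℝ) (i j : Fin r) :
    trigSymM Θ ξ i j
      = ∑ k ∈ Θ.support, Complex.exp (-Complex.I * (k : ℂ) * (ξ : ℂ)) * Θ k i j := by
  unfold trigSymM Finsupp.sum
  rw [Matrix.sum_apply]
  exact Finset.sum_congr rfl fun k _ => rfl

lemma phiSym_eq_finsuppSum (ξ : ℝ) (d : LaurentPolynomial ℂ) :
    phiSym ξ d = d.coeff.sum fun a c => c * (Complex.exp (-(ξ:ℂ) * Complex.I)) ^ a := by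
  unfold phiSym
  rw [AlgHom.toRingHom_eq_coe, RingHom.coe_coe, AddMonoidAlgebra.lift_apply]
  refine Finsupp.sum_congr fun a _ => ?_
  simp [Units.smul_def]

lemma trig_entry_phi (Θ : ℤ →₀ Matrix (Fin r) (Fin r) ℂ) (ξ : ℝ) (i j : Fin r) :
    trigSymM Θ ξ i j = phiSym ξ (toM Θ i j) := by
  rw [trig_entry, phiSym_eq_finsuppSum,
    show (toM Θ i j).coeff = Finsupp.mapRange (fun A => A i j) rfl Θ from rfl]
  erw [Finsupp.sum_mapRange_index
      (h := fun (a : ℤ) (c : ℂ) => c * (Complex.exp (-(ξ:ℂ) * Complex.I)) ^ a)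
      (fun a => zero_mul _)]
  unfold Finsupp.sum
  refine Finset.sum_congr rfl fun k _ => ?_
  rw [mul_comm]
  congr 1
  rw [show -Complex.I * (k:ℂ) * (ξ:ℂ) = ((k : ℤ) : ℂ) * (-(ξ:ℂ) * Complex.I) by ring,
    Complex.exp_int_mul]

lemma trig_det (Θ : ℤ →₀ Matrix (Fin r) (Fin r) ℂ) (ξ : ℝ) :
    (trigSymM Θ ξ).det = phiSym ξ ((toM Θ).det) := by
  rw [RingHom.map_det]
  congr 1
  ext i j
  rw [trig_entry_phi]
  rfl


/-- Lemma 3.2(1): the convolution operator `C_Θ : (l_∞(ℤ))^{1×r} → (l_∞(ℤ))^{1×r}` is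
injective if and only if `det Θ̂(ξ) ≠ 0` for all `ξ ∈ ℝ`. -/
theorem conv_injective_iff_det_ne_zero {r : ℕ}
    (Θ : ℤ →₀ Matrix (Fin r) (Fin r) ℂ) :
    (∀ v w : ℤ → Fin r → ℂ, IsBddSeq v → IsBddSeq w →
        convRow v Θ = convRow w Θ → v = w) ↔
    (∀ ξ : ℝ, (trigSymM Θ ξ).det ≠ 0) := by
  constructor
  · intro hinj ξ
    by_contra hdet
    obtain ⟨c, hc0, hcmul⟩ :=
      (Matrix.exists_vecMul_eq_zero_iff (M := trigSymM Θ ξ)).mpr hdet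
    set v : ℤ → Fin r → ℂ :=
      fun k i => Complex.exp ((((k : ℝ) * ξ : ℝ) : ℂ) * Complex.I) * c i with hv
    have hbdd : IsBddSeq v := by
      refine ⟨∑ i, ‖c i‖, fun k i => ?_⟩
      rw [hv]
      simp only
      rw [norm_mul]
      have h1 : ‖Complex.exp ((((k : ℝ) * ξ : ℝ) : ℂ) * Complex.I)‖ = 1 := by
        simpa using Complex.norm_exp_ofReal_mul_I ((k : ℝ) * ξ)
      rw [h1, one_mul]
      exact Finset.single_le_sum (f := fun i => ‖c i‖) (fun i _ => norm_nonneg _)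
        (Finset.mem_univ i)
    have hbdd0 : IsBddSeq (fun (_ : ℤ) (_ : Fin r) => (0 : ℂ)) := ⟨0, by simp⟩
    have hconv : convRow v Θ = convRow (fun _ _ => (0:ℂ)) Θ := by
      funext n j
      have hzero : convRow (fun (_ : ℤ) (_ : Fin r) => (0:ℂ)) Θ n j = 0 := by
        unfold convRow
        simp
      rw [hzero]
      show (∑ l ∈ Θ.support, ∑ i, v (n - l) i * Θ l i j) = 0
      have main : (∑ l ∈ Θ.support, ∑ i, v (n - l) i * Θ l i j)
          = Complex.exp ((((n : ℝ) * ξ : ℝ) : ℂ) * Complex.I)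
            * ((Matrix.vecMul c (trigSymM Θ ξ)) j) := by
        have hvm : (Matrix.vecMul c (trigSymM Θ ξ)) j = ∑ i, c i * trigSymM Θ ξ i j := rfl
        rw [hvm]
        simp only [trig_entry]
        rw [Finset.mul_sum]
        rw [Finset.sum_comm]
        refine Finset.sum_congr rfl fun i _ => ?_
        rw [Finset.mul_sum, Finset.mul_sum]
        refine Finset.sum_congr rfl fun l _ => ?_
        rw [hv]
        simp only
        have hexp : Complex.exp ((((n - l : ℤ) : ℝ) * ξ : ℝ) * Complex.I)
            = Complex.exp ((((n : ℝ) * ξ : ℝ) : ℂ) * Complex.I)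
              * Complex.exp (-Complex.I * (l : ℂ) * (ξ : ℂ)) := by
          rw [← Complex.exp_add]
          congr 1
          push_cast
          ring
        rw [hexp]
        ring
      rw [main, hcmul]
      simp
    have := hinj v (fun _ _ => 0) hbdd hbdd0 hconv
    apply hc0
    funext i
    have h2 := congrFun (congrFun this 0) i
    rw [hv] at h2
    simpa using h2
  · intro hdet v w hv hw heq
    have hconv0 : ∀ (m : ℤ) (i : Fin r),
        convRow (fun m' i' => v m' i' - w m' i') Θ m i = 0 := by
      intro m i
      unfold convRow
      simp only [sub_mul, Finset.sum_sub_distrib]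
      rw [sub_eq_zero]
      exact congrFun (congrFun heq m) i
    have hD : ∀ ξ : ℝ, phiSym ξ ((toM Θ).det) ≠ 0 := by
      intro ξ
      rw [← trig_det]
      exact hdet ξ
    funext n
    funext j
    have hbddu : IsBddS (fun m => v m j - w m j) := by
      obtain ⟨Mv, hMv⟩ := hv
      obtain ⟨Mw, hMw⟩ := hw
      exact ⟨Mv + Mw, fun m => (norm_sub_le _ _).trans (add_le_add (hMv m j) (hMw m j))⟩
    have hzero : ∀ n', convS (fun m => v m j - w m j) ((toM Θ).det) n' = 0 :=
      key_det (fun m' i' => v m' i' - w m' i') Θ hconv0 j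
    have := scalar_lemma (fun m => v m j - w m j) hbddu ((toM Θ).det) hD hzero
    have h2 := congrFun this n
    simpa [sub_eq_zero] using h2
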